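/- Let λ, μ, Q ∈ ℂ satisfy Aug_T(λ,μ,Q) = 0 and Q² + λμ² ≠ 0, where Aug_T(λ,μ,Q) := (μ⁴ − μ³)·λ² + (μ⁴ − Qμ³ + 2Q²μ² − 2Qμ² − Q²μ + Q²)·λ + (Q⁴ − Q³μ). Then there exist a₁₂, a₂₁ ∈ ℂ (explicitly, a₂₁ = (μ² − Q)/(Q² + λμ²) and a₁₂ = λ·a₂₁) satisfying the four equations a₁₂ − λ·a₂₁ = 0, λμ − λ − (2Q − μ)·a₁₂ − Q·a₁₂²·a₂₁ = 0, Q − μ + λμ·a₂₁ + Q·a₁₂·a₂₁ = 0, and μ − 1 − Q·a₂₁ + μ·a₁₂·a₂₁ = 0. -/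

import Mathlib

/-- Converse inclusion for the trefoil augmentation variety: away from the locus
`Q² + λμ² = 0`, every point of the zero locus of the augmentation polynomial `Aug_T`
admits an augmentation, with explicit values `a₂₁ = (μ² − Q)/(Q² + λμ²)`, `a₁₂ = λ·a₂₁`. -/
theorem trefoil_polynomial_vanishes_implies_augmentation
    (lam mu Q : ℂ)
    (hAug : (mu ^ 4 - mu ^ 3) * lam ^ 2
      + (mu ^ 4 - Q * mu ^ 3 + 2 * Q ^ 2 * mu ^ 2 - 2 * Q * mu ^ 2
          - Q ^ 2 * mu + Q ^ 2) * lam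
      + (Q ^ 4 - Q ^ 3 * mu) = 0)
    (hden : Q ^ 2 + lam * mu ^ 2 ≠ 0) :
    ∃ a12 a21 : ℂ,
      a21 = (mu ^ 2 - Q) / (Q ^ 2 + lam * mu ^ 2) ∧
      a12 = lam * a21 ∧
      a12 - lam * a21 = 0 ∧
      lam * mu - lam - (2 * Q - mu) * a12 - Q * a12 ^ 2 * a21 = 0 ∧
      Q - mu + lam * mu * a21 + Q * a12 * a21 = 0 ∧
      mu - 1 - Q * a21 + mu * a12 * a21 = 0 := by
  refine ⟨lam * ((mu ^ 2 - Q) / (Q ^ 2 + lam * mu ^ 2)),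
    (mu ^ 2 - Q) / (Q ^ 2 + lam * mu ^ 2), rfl, rfl, by ring, ?_, ?_, ?_⟩
  · field_simp
    linear_combination (lam ^ 2 * mu ^ 3 + lam * (Q ^ 2 + mu * Q ^ 2 - mu ^ 2 * Q)) * hAug
  · have h2 : Q ^ 2 + mu ^ 2 * lam ≠ 0 := by rwa [mul_comm]
    field_simp
    linear_combination Q * hAug
  · have h2 : Q ^ 2 + mu ^ 2 * lam ≠ 0 := by rwa [mul_comm]
    field_simp
    linear_combination mu * hAug
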